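/- Let ε > 0 with 1/ε ∈ ℕ. Let T' be a finite set of tasks, all having identical weight w and identical demand d, together with a schedule P(i) ⊆ E for every i ∈ T', such that there is an edge f contained in each path P(i). Then there exist a subset S ⊆ T', a set of boxes B with |B| ≤ 1/ε², and a partition of S into sets {S_b}_{b∈B} such that: (1) Σ_{b∈B : e∈pb(b)} h(b) ≤ Σ_{i∈T' : e∈P(i)} d(i) for each edge e ∈ E; (2) w(S) ≥ (1−6ε)·w(T'); (3) for each box b ∈ B, the tasks in S_b fit into b. -/

import Mathlib

/-- A box `b`, given by a subpath `pb(b) = {lo, …, hi}` of the path, a height `h`,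
a demand `d` and a weight `w`. -/
structure Box where
  lo : ℕ
  hi : ℕ
  h : ℕ
  d : ℕ
  w : ℕ
deriving DecidableEq

/-- The subpath `pb(b)` of a box. -/
def Box.pb (b : Box) : Finset ℕ := Finset.Icc b.lo b.hi

/-- A set `S` of tasks with schedules `P` fits into a box `b`: the total demand of `S` is
at most the height of `b`, each task of `S` can be scheduled within `pb(b)`
(i.e. `|P(i) ∩ pb(b)| ≥ p(i)`), and every task of `S` has weight `w(b)` and demand `d(b)`. -/
def FitsP {ι : Type} [DecidableEq ι] (w d p : ι → ℕ) (P : ι → Finset ℕ)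
    (S : Finset ι) (b : Box) : Prop :=
  (∑ i ∈ S, d i) ≤ b.h ∧ ∀ i ∈ S, p i ≤ ((P i) ∩ b.pb).card ∧ w i = b.w ∧ d i = b.d

lemma sort_lemma {n : ℕ} (s : ℕ) (m : ℕ) (a b : Fin n → ℕ)
    (hb : ∀ q, b q ≤ m) :
    ∃ π : Equiv.Perm (Fin n),
      (∀ q q' : Fin n, (q : ℕ) / s < (q' : ℕ) / s → a (π q) ≤ a (π q')) ∧
      (∀ q q' : Fin n, (q : ℕ) / s = (q' : ℕ) / s → q ≤ q' → b (π q') ≤ b (π q)) := by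
  classical
  set σ₁ := Tuple.sort a with hσ₁
  have ha1 : Monotone (a ∘ σ₁) := Tuple.monotone_sort a
  set F : Fin n → ℕ := fun q => ((q : ℕ) / s) * (m + 1) + (m - b (σ₁ q)) with hF
  set σ₂ := Tuple.sort F with hσ₂
  have hF1 : Monotone (F ∘ σ₂) := Tuple.monotone_sort F
  set g : Fin n → ℕ := fun q => (q : ℕ) / s with hg
  have hgmono : Monotone g := fun q q' h => Nat.div_le_div_right h
  have hFdiv : ∀ q : Fin n, F q / (m + 1) = g q := by
    intro q
    have h1 : m - b (σ₁ q) < m + 1 := by omega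
    show (_ * (m+1) + _) / (m+1) = _
    rw [add_comm, Nat.add_mul_div_right _ _ (Nat.succ_pos m), Nat.div_eq_of_lt h1, Nat.zero_add]
  have hgσ₂ : Monotone (g ∘ σ₂) := by
    intro q q' h
    have := hF1 h
    simp only [Function.comp] at this ⊢
    rw [← hFdiv, ← hFdiv]
    exact Nat.div_le_div_right this
  have hgeq : g ∘ σ₂ = g := by
    have := Tuple.unique_monotone (f := g) (σ := σ₂) (τ := 1) hgσ₂ (by simpa using hgmono)
    simpa using this
  refine ⟨σ₂.trans σ₁, ?_, ?_⟩
  · intro q q' h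
    have hb1 : g (σ₂ q) = g q := congrFun hgeq q
    have hb2 : g (σ₂ q') = g q' := congrFun hgeq q'
    have : (σ₂ q : ℕ) / s < (σ₂ q' : ℕ) / s := by
      simp only [hg] at hb1 hb2; omega
    have hlt : σ₂ q ≤ σ₂ q' := by
      by_contra hc
      push_neg at hc
      have : (σ₂ q' : ℕ) / s ≤ (σ₂ q : ℕ) / s := Nat.div_le_div_right (le_of_lt hc)
      omega
    exact ha1 hlt
  · intro q q' hblk hle
    have hb1 : g (σ₂ q) = g q := congrFun hgeq q
    have hb2 : g (σ₂ q') = g q' := congrFun hgeq q'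
    have hFle : F (σ₂ q) ≤ F (σ₂ q') := hF1 hle
    have hgeq2 : (σ₂ q : ℕ) / s = (σ₂ q' : ℕ) / s := by
      simp only [hg] at hb1 hb2; omega
    simp only [hF] at hFle
    rw [hgeq2] at hFle
    have h1 := hb (σ₁ (σ₂ q))
    have h2 := hb (σ₁ (σ₂ q'))
    simp only [Equiv.trans_apply]
    omega

/-- Box-packing lemma: given a finite set `T'` of tasks, all of identical weight `w₀` and
identical demand `d₀`, each scheduled on a subpath `P i` of the path `{1, …, m}` of exactly
`p i` edges, such that some edge `f` lies on all the paths `P i`, there are a subset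
`S ⊆ T'`, at most `1/ε²` boxes and a partition of `S` among the boxes such that
(1) on each edge, the total height of the boxes containing it is at most the total demand of
the tasks of `T'` scheduled on it, (2) `w(S) ≥ (1 - 6ε) w(T')`, and (3) the tasks assigned
to each box fit into it. -/
theorem box_packing {ι : Type} [DecidableEq ι] (m : ℕ) (w d p : ι → ℕ) (P : ι → Finset ℕ)
    (ε : ℝ) (hε : 0 < ε) (K : ℕ) (hK : (K : ℝ) = 1 / ε)
    (T' : Finset ι) (w₀ d₀ : ℕ)
    (hw : ∀ i ∈ T', w i = w₀) (hd : ∀ i ∈ T', d i = d₀)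
    (hP : ∀ i ∈ T', ∃ a b : ℕ, 1 ≤ a ∧ a ≤ b ∧ b ≤ m ∧ P i = Finset.Icc a b ∧
      (P i).card = p i)
    (f : ℕ) (hf : ∀ i ∈ T', f ∈ P i) :
    ∃ (S : Finset ι) (nB : ℕ) (boxes : Fin nB → Box) (assign : ι → Fin nB),
      S ⊆ T' ∧
      (nB : ℝ) ≤ 1 / ε ^ 2 ∧
      (∀ e ∈ Finset.Icc 1 m,
        ∑ j ∈ Finset.univ.filter (fun j : Fin nB => e ∈ (boxes j).pb), (boxes j).h ≤
          ∑ i ∈ T'.filter (fun i => e ∈ P i), d i) ∧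
      ((1 - 6 * ε) * (∑ i ∈ T', (w i : ℝ)) ≤ ∑ i ∈ S, (w i : ℝ)) ∧
      (∀ j : Fin nB, FitsP w d p P (S.filter (fun i => assign i = j)) (boxes j)) := by
  classical
  have hεK : (0:ℝ) < (K:ℝ) := by rw [hK]; positivity
  have hKpos : 0 < K := by exact_mod_cast hεK
  have hKKpos : 0 < K * K := Nat.mul_pos hKpos hKpos
  have hKK : ((K * K : ℕ) : ℝ) ≤ 1 / ε ^ 2 := by
    push_cast
    rw [hK]
    rw [div_mul_div_comm, one_mul, sq]
  -- extract endpoints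
  have hPd : ∀ i, ∃ ab : ℕ × ℕ, i ∈ T' → 1 ≤ ab.1 ∧ ab.1 ≤ ab.2 ∧ ab.2 ≤ m ∧
      P i = Finset.Icc ab.1 ab.2 ∧ (P i).card = p i := by
    intro i
    by_cases h : i ∈ T'
    · obtain ⟨a, b, h1, h2, h3, h4, h5⟩ := hP i h
      exact ⟨(a, b), fun _ => ⟨h1, h2, h3, h4, h5⟩⟩
    · exact ⟨(1, 0), fun h' => absurd h' h⟩
  choose AB hAB using hPd
  set A : ι → ℕ := fun i => (AB i).1 with hA_def
  set B : ι → ℕ := fun i => (AB i).2 with hB_def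
  have hfacts : ∀ i ∈ T', 1 ≤ A i ∧ A i ≤ f ∧ f ≤ B i ∧ B i ≤ m ∧
      P i = Finset.Icc (A i) (B i) ∧ (P i).card = p i := by
    intro i hi
    obtain ⟨h1, h2, h3, h4, h5⟩ := hAB i hi
    have hfi := hf i hi
    rw [h4, Finset.mem_Icc] at hfi
    exact ⟨h1, hfi.1, hfi.2, h3, h4, h5⟩
  set n := T'.card with hn_def
  set E := T'.equivFin with hE_def
  set u0 : Fin n → ι := fun q => ((E.symm q : {x // x ∈ T'}) : ι) with hu0_def
  have hu0T : ∀ q, u0 q ∈ T' := fun q => (E.symm q).2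
  have hu0inj : Function.Injective u0 := fun q q' h =>
    E.symm.injective (Subtype.coe_injective h)
  rcases le_or_gt n (K * K) with hcase | hcase
  · -- easy case: one box per task
    set boxes : Fin (K * K) → Box := fun c =>
      if h : (c : ℕ) < n then
        ⟨A (u0 ⟨c, h⟩), B (u0 ⟨c, h⟩), d₀, d₀, w₀⟩
      else ⟨1, 0, 0, d₀, w₀⟩ with hboxes_def
    set assign : ι → Fin (K * K) := fun i =>
      if h : i ∈ T' then ⟨(E ⟨i, h⟩ : ℕ), lt_of_lt_of_le (Fin.is_lt _) hcase⟩
      else ⟨0, hKKpos⟩ with hassign_def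
    refine ⟨T', K * K, boxes, assign, Finset.Subset.refl _, hKK, ?_, ?_, ?_⟩
    · -- capacity
      intro e he
      rw [Finset.mem_Icc] at he
      set F := Finset.univ.filter (fun c : Fin (K * K) => e ∈ (boxes c).pb) with hF_def
      have hFr : ∀ c ∈ F, ∃ h : (c : ℕ) < n, e ∈ P (u0 ⟨c, h⟩) := by
        intro c hc
        rw [hF_def, Finset.mem_filter] at hc
        by_cases h : (c : ℕ) < n
        · refine ⟨h, ?_⟩
          have hc2 := hc.2
          rw [hboxes_def] at hc2
          simp only [dif_pos h, Box.pb] at hc2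
          rw [(hfacts _ (hu0T ⟨c, h⟩)).2.2.2.2.1]
          exact hc2
        · exfalso
          have hc2 := hc.2
          rw [hboxes_def] at hc2
          simp only [dif_neg h, Box.pb, Finset.mem_Icc] at hc2
          omega
      have hcard : F.card ≤ (T'.filter (fun i => e ∈ P i)).card := by
        rcases F.eq_empty_or_nonempty with hFe | ⟨c₀, hc₀⟩
        · simp [hFe]
        · obtain ⟨h₀, _⟩ := hFr c₀ hc₀
          have hn0 : 0 < n := lt_of_le_of_lt (Nat.zero_le _) h₀
          refine Finset.card_le_card_of_injOn
            (f := fun c => if h : (c : ℕ) < n then u0 ⟨c, h⟩ else u0 ⟨0, hn0⟩) ?_ ?_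
          · intro c hc
            obtain ⟨h, hc2⟩ := hFr c hc
            simp only [dif_pos h]
            exact Finset.mem_filter.mpr ⟨hu0T _, hc2⟩
          · intro c hc c' hc' heq
            obtain ⟨h, _⟩ := hFr c (Finset.mem_coe.mp hc)
            obtain ⟨h', _⟩ := hFr c' (Finset.mem_coe.mp hc')
            simp only [dif_pos h, dif_pos h'] at heq
            have := hu0inj heq
            have := congrArg Fin.val this
            exact Fin.ext this
      calc ∑ c ∈ F, (boxes c).h = ∑ c ∈ F, d₀ := by
            apply Finset.sum_congr rfl
            intro c hc
            obtain ⟨h, _⟩ := hFr c hc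
            rw [hboxes_def]
            simp only [dif_pos h]
        _ = F.card * d₀ := by rw [Finset.sum_const, smul_eq_mul]
        _ ≤ (T'.filter (fun i => e ∈ P i)).card * d₀ := Nat.mul_le_mul_right _ hcard
        _ = ∑ i ∈ T'.filter (fun i => e ∈ P i), d i := by
            rw [Finset.sum_congr rfl
              (fun i hi => hd i (Finset.mem_filter.mp hi).1), Finset.sum_const, smul_eq_mul]
    · -- weight
      have hW : (0:ℝ) ≤ ∑ i ∈ T', (w i : ℝ) :=
        Finset.sum_nonneg (fun i _ => Nat.cast_nonneg _)
      nlinarith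
    · -- fits
      intro j
      by_cases hj : (j : ℕ) < n
      · have hset : T'.filter (fun i => assign i = j) = {u0 ⟨j, hj⟩} := by
          ext i
          simp only [Finset.mem_filter, Finset.mem_singleton]
          constructor
          · rintro ⟨hiT, hass⟩
            rw [hassign_def] at hass
            simp only [dif_pos hiT] at hass
            have hval : ((E ⟨i, hiT⟩ : Fin n) : ℕ) = (j : ℕ) := congrArg Fin.val hass
            have hE : (E ⟨i, hiT⟩ : Fin n) = ⟨(j : ℕ), hj⟩ := Fin.ext hval
            have := congrArg E.symm hE
            rw [Equiv.symm_apply_apply] at this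
            have := congrArg Subtype.val this
            exact this
          · rintro rfl
            refine ⟨hu0T _, ?_⟩
            rw [hassign_def]
            simp only [dif_pos (hu0T ⟨(j : ℕ), hj⟩)]
            apply Fin.ext
            show ((E ⟨u0 ⟨(j : ℕ), hj⟩, _⟩ : Fin n) : ℕ) = (j : ℕ)
            have : (⟨u0 ⟨(j : ℕ), hj⟩, hu0T _⟩ : {x // x ∈ T'}) = E.symm ⟨(j : ℕ), hj⟩ :=
              Subtype.ext rfl
            rw [this, Equiv.apply_symm_apply]
        rw [hset]
        have hfi := hfacts (u0 ⟨(j : ℕ), hj⟩) (hu0T _)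
        constructor
        · rw [Finset.sum_singleton, hd _ (hu0T _), hboxes_def]
          simp only [dif_pos hj]
          exact le_rfl
        · intro i hi
          rw [Finset.mem_singleton] at hi
          subst hi
          rw [hboxes_def]
          simp only [dif_pos hj]
          refine ⟨?_, hw _ (hu0T _), hd _ (hu0T _)⟩
          show p _ ≤ (P _ ∩ Box.pb _).card
          rw [Box.pb]
          show p _ ≤ (P _ ∩ Finset.Icc (A _) (B _)).card
          rw [← hfi.2.2.2.2.1, Finset.inter_self, hfi.2.2.2.2.2]
      · have hset : T'.filter (fun i => assign i = j) = ∅ := by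
          apply Finset.eq_empty_iff_forall_notMem.mpr
          intro i hi
          rw [Finset.mem_filter] at hi
          obtain ⟨hiT, hass⟩ := hi
          rw [hassign_def] at hass
          simp only [dif_pos hiT] at hass
          have hval : ((E ⟨i, hiT⟩ : Fin n) : ℕ) = (j : ℕ) := congrArg Fin.val hass
          exact hj (hval ▸ Fin.is_lt _)
        rw [hset]
        exact ⟨by simp, fun i hi => absurd hi (Finset.notMem_empty i)⟩
  · -- hard case
    set s : ℕ := n / K + 1 with hs_def
    set t : ℕ := s / K + 1 with ht_def
    have hs : 0 < s := Nat.succ_pos _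
    have ht : 0 < t := Nat.succ_pos _
    have hsK : n < s * K := by
      calc n = K * (n / K) + n % K := (Nat.div_add_mod n K).symm
        _ < K * (n / K) + K := by have := Nat.mod_lt n hKpos; omega
        _ = s * K := by rw [hs_def]; ring
    have htK : s < t * K := by
      calc s = K * (s / K) + s % K := (Nat.div_add_mod s K).symm
        _ < K * (s / K) + K := by have := Nat.mod_lt s hKpos; omega
        _ = t * K := by rw [ht_def]; ring
    obtain ⟨π, HA, HB⟩ := sort_lemma s m (fun q => A (u0 q)) (fun q => B (u0 q))
      (fun q => (hfacts _ (hu0T q)).2.2.2.1)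
    set u : Fin n → ι := fun q => u0 (π q) with hu_def
    have huT : ∀ q, u q ∈ T' := fun q => hu0T _
    have huinj : Function.Injective u := fun q q' h => π.injective (hu0inj h)
    have hdivK : ∀ q : Fin n, (q : ℕ) / s < K :=
      fun q => Nat.div_lt_of_lt_mul (lt_trans q.isLt hsK)
    have hmodt : ∀ q : Fin n, ((q : ℕ) % s) / t < K :=
      fun q => Nat.div_lt_of_lt_mul (lt_trans (Nat.mod_lt _ hs) htK)
    have hencP : ∀ q : Fin n, ((q : ℕ) / s) * K + ((q : ℕ) % s) / t < K * K := by
      intro q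
      have h1 := hdivK q
      have h2 := hmodt q
      calc ((q : ℕ) / s) * K + ((q : ℕ) % s) / t < ((q : ℕ) / s) * K + K := by omega
        _ = ((q : ℕ) / s + 1) * K := by ring
        _ ≤ K * K := Nat.mul_le_mul_right K h1
    set enc : Fin n → Fin (K * K) :=
      fun q => ⟨((q : ℕ) / s) * K + ((q : ℕ) % s) / t, hencP q⟩ with henc_def
    have hencdiv : ∀ q : Fin n, ((enc q : Fin (K * K)) : ℕ) / K = (q : ℕ) / s := by
      intro q
      show (((q : ℕ) / s) * K + ((q : ℕ) % s) / t) / K = (q : ℕ) / s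
      rw [add_comm, Nat.add_mul_div_right _ _ hKpos, Nat.div_eq_of_lt (hmodt q), Nat.zero_add]
    have hencmod : ∀ q : Fin n, ((enc q : Fin (K * K)) : ℕ) % K = ((q : ℕ) % s) / t := by
      intro q
      show (((q : ℕ) / s) * K + ((q : ℕ) % s) / t) % K = ((q : ℕ) % s) / t
      rw [add_comm, Nat.add_mul_mod_self_right, Nat.mod_eq_of_lt (hmodt q)]
    set cellQ : Fin (K * K) → Finset (Fin n) :=
      fun c => Finset.univ.filter (fun q => enc q = c) with hcell_def
    have hmem_cell : ∀ (c : Fin (K * K)) (q : Fin n), q ∈ cellQ c ↔ enc q = c := by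
      intro c q
      simp only [hcell_def, Finset.mem_filter, Finset.mem_univ, true_and]
    set boxes : Fin (K * K) → Box := fun c =>
      if h : (cellQ c).Nonempty ∧ (c : ℕ) / K ≠ 0 ∧ (c : ℕ) % K ≠ 0 then
        ⟨((cellQ c).image (fun q => A (u q))).min' (h.1.image _),
         ((cellQ c).image (fun q => B (u q))).max' (h.1.image _),
         d₀ * (cellQ c).card, d₀, w₀⟩
      else ⟨1, 0, 0, d₀, w₀⟩ with hboxes_def
    set keep : Finset (Fin n) :=
      Finset.univ.filter (fun q => ¬((q : ℕ) / s = 0 ∨ ((q : ℕ) % s) / t = 0)) with hkeep_def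
    have hmem_keep : ∀ q : Fin n,
        q ∈ keep ↔ ¬((q : ℕ) / s = 0 ∨ ((q : ℕ) % s) / t = 0) := by
      intro q
      simp only [hkeep_def, Finset.mem_filter, Finset.mem_univ, true_and]
    set S : Finset ι := keep.image u with hS_def
    set assign : ι → Fin (K * K) := fun i =>
      if h : i ∈ T' then enc (π.symm (E ⟨i, h⟩)) else ⟨0, hKKpos⟩ with hassign_def
    have hqI : ∀ (q : Fin n) (h : u q ∈ T'), π.symm (E ⟨u q, h⟩) = q := by
      intro q h
      have h1 : (⟨u q, h⟩ : {x // x ∈ T'}) = E.symm (π q) := Subtype.ext rfl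
      rw [h1, Equiv.apply_symm_apply, Equiv.symm_apply_apply]
    have hassign_u : ∀ q : Fin n, assign (u q) = enc q := by
      intro q
      rw [hassign_def]
      simp only [dif_pos (huT q)]
      rw [hqI]
    have hfilter : ∀ c : Fin (K * K),
        S.filter (fun i => assign i = c) = ((cellQ c) ∩ keep).image u := by
      intro c
      ext i
      simp only [hS_def, Finset.mem_filter, Finset.mem_image, Finset.mem_inter]
      constructor
      · rintro ⟨⟨q, hq, rfl⟩, hass⟩
        rw [hassign_u q] at hass
        exact ⟨q, ⟨(hmem_cell c q).mpr hass, hq⟩, rfl⟩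
      · rintro ⟨q, ⟨hqc, hqk⟩, rfl⟩
        exact ⟨⟨q, hqk, rfl⟩, by rw [hassign_u q, (hmem_cell c q).mp hqc]⟩
    have hcell_keep : ∀ c : Fin (K * K), (c : ℕ) / K ≠ 0 → (c : ℕ) % K ≠ 0 →
        cellQ c ∩ keep = cellQ c := by
      intro c h1 h2
      apply Finset.inter_eq_left.mpr
      intro q hq
      have hqc := (hmem_cell c q).mp hq
      have e1 : (c : ℕ) / K = (q : ℕ) / s := by rw [← hqc, hencdiv]
      have e2 : (c : ℕ) % K = ((q : ℕ) % s) / t := by rw [← hqc, hencmod]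
      exact (hmem_keep q).mpr
        (fun hor => hor.elim (fun h => h1 (e1.trans h))
          (fun h => h2 (e2.trans h)))
    -- capacity condition
    have hcap : ∀ e ∈ Finset.Icc 1 m,
        ∑ c ∈ Finset.univ.filter (fun c : Fin (K * K) => e ∈ (boxes c).pb), (boxes c).h ≤
          ∑ i ∈ T'.filter (fun i => e ∈ P i), d i := by
      intro e he
      rw [Finset.mem_Icc] at he
      set Cov := T'.filter (fun i => e ∈ P i) with hCov_def
      set F := Finset.univ.filter (fun c : Fin (K * K) => e ∈ (boxes c).pb) with hF_def
      have hFreal : ∀ c ∈ F, (cellQ c).Nonempty ∧ (c : ℕ) / K ≠ 0 ∧ (c : ℕ) % K ≠ 0 := by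
        intro c hc
        rw [hF_def, Finset.mem_filter] at hc
        by_contra h
        have hc2 := hc.2
        rw [hboxes_def] at hc2
        simp only [dif_neg h, Box.pb, Finset.mem_Icc] at hc2
        omega
      set W := Finset.univ.filter (fun q : Fin n => enc q ∈ F) with hW_def
      have hWmem : ∀ q : Fin n, q ∈ W ↔ enc q ∈ F := by
        intro q
        simp only [hW_def, Finset.mem_filter, Finset.mem_univ, true_and]
      have hWcard : W.card = ∑ c ∈ F, (cellQ c).card := by
        rw [Finset.card_eq_sum_card_fiberwise (fun q hq => (hWmem q).mp hq)]
        apply Finset.sum_congr rfl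
        intro c hc
        congr 1
        ext q
        rw [Finset.mem_filter, hmem_cell]
        exact ⟨fun h => h.2, fun h => ⟨(hWmem q).mpr (h ▸ hc), h⟩⟩
      have hWs : ∀ q ∈ W, s ≤ (q : ℕ) ∧ t ≤ (q : ℕ) % s := by
        intro q hq
        have hcF : enc q ∈ F := (hWmem q).mp hq
        have hreal := hFreal _ hcF
        have h1 : (q : ℕ) / s ≠ 0 := by rw [← hencdiv q]; exact hreal.2.1
        have h2 : ((q : ℕ) % s) / t ≠ 0 := by rw [← hencmod q]; exact hreal.2.2
        constructor
        · by_contra hcon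
          push_neg at hcon
          exact h1 (Nat.div_eq_of_lt hcon)
        · by_contra hcon
          push_neg at hcon
          exact h2 (Nat.div_eq_of_lt hcon)
      have hWCov : W.card ≤ Cov.card := by
        rcases le_total e f with hef | hfe
        · -- e ≤ f : shift one block to the left
          refine Finset.card_le_card_of_injOn
            (f := fun q => u ⟨(q : ℕ) - s, lt_of_le_of_lt (Nat.sub_le _ _) q.isLt⟩) ?_ ?_
          · intro q hq
            have hcF : enc q ∈ F := (hWmem q).mp hq
            have hreal := hFreal _ hcF
            have hcov : e ∈ (boxes (enc q)).pb := (Finset.mem_filter.mp hcF).2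
            rw [hboxes_def] at hcov
            simp only [dif_pos hreal, Box.pb, Finset.mem_Icc] at hcov
            have hminmem := Finset.min'_mem
              ((cellQ (enc q)).image (fun q' => A (u q'))) (hreal.1.image _)
            rw [Finset.mem_image] at hminmem
            obtain ⟨q₀, hq₀c, hq₀⟩ := hminmem
            have hA0 : A (u q₀) ≤ e := by rw [hq₀]; exact hcov.1
            have hq₀blk : (q₀ : ℕ) / s = (q : ℕ) / s := by
              have h := hencdiv q₀
              rw [(hmem_cell _ q₀).mp hq₀c] at h
              rw [← h]
              exact hencdiv q
            have hsq : s ≤ (q : ℕ) := (hWs q hq).1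
            have hblt : ((q : ℕ) - s) / s < (q₀ : ℕ) / s := by
              rw [hq₀blk, Nat.div_lt_iff_lt_mul hs]
              have hmul : (q : ℕ) < ((q : ℕ) / s + 1) * s := by
                rw [← Nat.div_lt_iff_lt_mul hs]
                exact Nat.lt_succ_self _
              have hexp : ((q : ℕ) / s + 1) * s = (q : ℕ) / s * s + s := by ring
              omega
            have hAle : A (u ⟨(q : ℕ) - s, lt_of_le_of_lt (Nat.sub_le _ _) q.isLt⟩)
                ≤ A (u q₀) := HA _ _ hblt
            rw [Finset.mem_coe, hCov_def, Finset.mem_filter]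
            refine ⟨huT _, ?_⟩
            rw [(hfacts _ (huT _)).2.2.2.2.1, Finset.mem_Icc]
            exact ⟨le_trans hAle hA0, le_trans hef (hfacts _ (huT _)).2.2.1⟩
          · intro q hq q' hq' heq
            have h1 := (hWs q (Finset.mem_coe.mp hq)).1
            have h2 := (hWs q' (Finset.mem_coe.mp hq')).1
            have hval := congrArg Fin.val (huinj heq)
            simp only at hval
            apply Fin.ext
            omega
        · -- f ≤ e : shift one subblock to the left
          refine Finset.card_le_card_of_injOn
            (f := fun q => u ⟨(q : ℕ) - t, lt_of_le_of_lt (Nat.sub_le _ _) q.isLt⟩) ?_ ?_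
          · intro q hq
            have hcF : enc q ∈ F := (hWmem q).mp hq
            have hreal := hFreal _ hcF
            have hcov : e ∈ (boxes (enc q)).pb := (Finset.mem_filter.mp hcF).2
            rw [hboxes_def] at hcov
            simp only [dif_pos hreal, Box.pb, Finset.mem_Icc] at hcov
            have hmaxmem := Finset.max'_mem
              ((cellQ (enc q)).image (fun q' => B (u q'))) (hreal.1.image _)
            rw [Finset.mem_image] at hmaxmem
            obtain ⟨q₀, hq₀c, hq₀⟩ := hmaxmem
            have hB0 : e ≤ B (u q₀) := by rw [hq₀]; exact hcov.2
            have hq₀blk : (q₀ : ℕ) / s = (q : ℕ) / s := by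
              have h := hencdiv q₀
              rw [(hmem_cell _ q₀).mp hq₀c] at h
              rw [← h]
              exact hencdiv q
            have hq₀mod : ((q₀ : ℕ) % s) / t = ((q : ℕ) % s) / t := by
              have h := hencmod q₀
              rw [(hmem_cell _ q₀).mp hq₀c] at h
              rw [← h]
              exact hencmod q
            have hts : t ≤ (q : ℕ) % s := (hWs q hq).2
            have htq : t ≤ (q : ℕ) := le_trans hts (Nat.mod_le _ _)
            have hdm : s * ((q : ℕ) / s) + (q : ℕ) % s = (q : ℕ) := Nat.div_add_mod _ _
            have hdm0 : s * ((q₀ : ℕ) / s) + (q₀ : ℕ) % s = (q₀ : ℕ) := Nat.div_add_mod _ _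
            have hXeq : s * ((q₀ : ℕ) / s) = s * ((q : ℕ) / s) := by rw [hq₀blk]
            have hlt : (q : ℕ) % s < (((q : ℕ) % s) / t + 1) * t := by
              rw [← Nat.div_lt_iff_lt_mul ht]
              exact Nat.lt_succ_self _
            have hexp : (((q : ℕ) % s) / t + 1) * t = ((q : ℕ) % s) / t * t + t := by ring
            have hge : ((q₀ : ℕ) % s) / t * t ≤ (q₀ : ℕ) % s := Nat.div_mul_le_self _ _
            have hkt : ((q : ℕ) % s) / t * t = ((q₀ : ℕ) % s) / t * t := by rw [hq₀mod]
            -- same block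
            have hblkeq : (((q : ℕ) - t)) / s = (q₀ : ℕ) / s := by
              rw [hq₀blk]
              apply le_antisymm
              · exact Nat.div_le_div_right (Nat.sub_le _ _)
              · rw [Nat.le_div_iff_mul_le hs]
                have hcomm : (q : ℕ) / s * s = s * ((q : ℕ) / s) := Nat.mul_comm _ _
                omega
            have hqle : ((q : ℕ) - t) ≤ (q₀ : ℕ) := by omega
            have hBle : B (u q₀) ≤ B (u ⟨(q : ℕ) - t, lt_of_le_of_lt (Nat.sub_le _ _) q.isLt⟩) := by
              apply HB
              · exact hblkeq.symm ▸ rfl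
              · rw [Fin.le_def]
                exact hqle
            rw [Finset.mem_coe, hCov_def, Finset.mem_filter]
            refine ⟨huT _, ?_⟩
            rw [(hfacts _ (huT _)).2.2.2.2.1, Finset.mem_Icc]
            exact ⟨le_trans (hfacts _ (huT _)).2.1 hfe, le_trans hB0 hBle⟩
          · intro q hq q' hq' heq
            have h1 := le_trans (hWs q (Finset.mem_coe.mp hq)).2 (Nat.mod_le _ _)
            have h2 := le_trans (hWs q' (Finset.mem_coe.mp hq')).2 (Nat.mod_le _ _)
            have hval := congrArg Fin.val (huinj heq)
            simp only at hval
            apply Fin.ext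
            omega
      have hsum1 : ∑ c ∈ F, (boxes c).h = d₀ * W.card := by
        rw [hWcard, Finset.mul_sum]
        apply Finset.sum_congr rfl
        intro c hc
        rw [hboxes_def]
        simp only [dif_pos (hFreal c hc)]
      have hsum2 : ∑ i ∈ Cov, d i = d₀ * Cov.card := by
        rw [Finset.sum_congr rfl (fun i hi => hd i (Finset.mem_filter.mp hi).1),
          Finset.sum_const, smul_eq_mul, mul_comm]
      rw [hsum1, hsum2]
      exact Nat.mul_le_mul_left d₀ hWCov
    -- weight condition
    have hwt : (1 - 6 * ε) * (∑ i ∈ T', (w i : ℝ)) ≤ ∑ i ∈ S, (w i : ℝ) := by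
      set D := Finset.univ.filter
        (fun q : Fin n => (q : ℕ) / s = 0 ∨ ((q : ℕ) % s) / t = 0) with hD_def
      have hDcard : D.card ≤ s + K * t := by
        have hsplit : D ⊆ (Finset.univ.filter (fun q : Fin n => (q : ℕ) / s = 0)) ∪
            (Finset.univ.filter (fun q : Fin n => ((q : ℕ) % s) / t = 0)) := by
          intro q hq
          rw [hD_def, Finset.mem_filter] at hq
          rcases hq.2 with h | h
          · exact Finset.mem_union_left _ (Finset.mem_filter.mpr ⟨Finset.mem_univ _, h⟩)
          · exact Finset.mem_union_right _ (Finset.mem_filter.mpr ⟨Finset.mem_univ _, h⟩)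
        have hc1 : (Finset.univ.filter (fun q : Fin n => (q : ℕ) / s = 0)).card
            ≤ (Finset.range s).card := by
          refine Finset.card_le_card_of_injOn (f := fun q : Fin n => (q : ℕ)) ?_ ?_
          · intro q hq
            rw [Finset.mem_coe, Finset.mem_filter] at hq
            show (q : ℕ) ∈ Finset.range s
            rw [Finset.mem_range]
            by_contra hcon
            push_neg at hcon
            have h1 := (Nat.one_le_div_iff hs).mpr hcon
            omega
          · intro a _ b _ hab
            exact Fin.ext hab
        rw [Finset.card_range] at hc1
        have hc2 : (Finset.univ.filter (fun q : Fin n => ((q : ℕ) % s) / t = 0)).card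
            ≤ (Finset.range K ×ˢ Finset.range t).card := by
          refine Finset.card_le_card_of_injOn
            (f := fun q : Fin n => ((q : ℕ) / s, (q : ℕ) % s)) ?_ ?_
          · intro q hq
            rw [Finset.mem_coe, Finset.mem_filter] at hq
            show ((q : ℕ) / s, (q : ℕ) % s) ∈ Finset.range K ×ˢ Finset.range t
            rw [Finset.mem_product, Finset.mem_range, Finset.mem_range]
            refine ⟨hdivK q, ?_⟩
            show (q : ℕ) % s < t
            by_contra hcon
            push_neg at hcon
            have h1 := (Nat.one_le_div_iff ht).mpr hcon
            omega
          · intro a ha b hb hab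
            have h1 : (a : ℕ) / s = (b : ℕ) / s := congrArg Prod.fst hab
            have h2 : (a : ℕ) % s = (b : ℕ) % s := congrArg Prod.snd hab
            apply Fin.ext
            have hda := Nat.div_add_mod (a : ℕ) s
            have hdb := Nat.div_add_mod (b : ℕ) s
            have h3 : s * ((a : ℕ) / s) = s * ((b : ℕ) / s) := by rw [h1]
            omega
        rw [Finset.card_product, Finset.card_range, Finset.card_range] at hc2
        calc D.card ≤ _ := Finset.card_le_card hsplit
          _ ≤ _ + _ := Finset.card_union_le _ _
          _ ≤ s + K * t := by omega
      have hkeepD : keep.card + D.card = n := by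
        have h := Finset.card_filter_add_card_filter_not
          (s := (Finset.univ : Finset (Fin n)))
          (p := fun q : Fin n => (q : ℕ) / s = 0 ∨ ((q : ℕ) % s) / t = 0)
        rw [Finset.card_univ, Fintype.card_fin] at h
        have h2 : D.card + keep.card = n := h
        omega
      have hsK' : s * K ≤ n + K := by
        have h1 : n / K * K ≤ n := Nat.div_mul_le_self n K
        have h2 : s * K = n / K * K + K := by rw [hs_def]; ring
        omega
      have htK' : t * K ≤ s + K := by
        have h1 : s / K * K ≤ s := Nat.div_mul_le_self s K
        have h2 : t * K = s / K * K + K := by rw [ht_def]; ring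
        omega
      have hDK : D.card * K ≤ 6 * n := by
        have h3 : D.card * K ≤ (s + K * t) * K := Nat.mul_le_mul_right K hDcard
        have h4 : (s + K * t) * K = s * K + K * (t * K) := by ring
        have h5 : K * (t * K) ≤ K * (s + K) := Nat.mul_le_mul_left K htK'
        have h6 : K * (s + K) = s * K + K * K := by ring
        have h7 : K * K + 1 ≤ n := hcase
        have h9 : K ≤ K * K := Nat.le_mul_of_pos_left K hKpos
        omega
      have hkeepn : (keep.card : ℝ) = (n : ℝ) - (D.card : ℝ) := by
        have h := hkeepD
        push_cast [← h]
        ring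
      have hKε : (K : ℝ) * ε = 1 := by
        rw [hK]
        field_simp
      have hDKr : (D.card : ℝ) * (K : ℝ) ≤ 6 * (n : ℝ) := by exact_mod_cast hDK
      have hD6 : (D.card : ℝ) ≤ 6 * (n : ℝ) * ε := by
        have h1 := mul_le_mul_of_nonneg_right hDKr hε.le
        calc (D.card : ℝ) = (D.card : ℝ) * ((K : ℝ) * ε) := by rw [hKε, mul_one]
          _ = (D.card : ℝ) * (K : ℝ) * ε := by ring
          _ ≤ 6 * (n : ℝ) * ε := h1
      have hSsum : ∑ i ∈ S, (w i : ℝ) = (keep.card : ℝ) * (w₀ : ℝ) := by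
        rw [hS_def, Finset.sum_image (fun q _ q' _ h => huinj h),
          Finset.sum_congr rfl (fun q _ => by rw [hw _ (huT q)]),
          Finset.sum_const, nsmul_eq_mul]
      have hTsum : ∑ i ∈ T', (w i : ℝ) = (n : ℝ) * (w₀ : ℝ) := by
        rw [Finset.sum_congr rfl (fun i hi => by rw [hw i hi]),
          Finset.sum_const, nsmul_eq_mul]
      rw [hSsum, hTsum]
      have h7 : (1 - 6 * ε) * (n : ℝ) ≤ (keep.card : ℝ) := by
        rw [hkeepn]
        nlinarith
      calc (1 - 6 * ε) * ((n : ℝ) * (w₀ : ℝ)) = ((1 - 6 * ε) * (n : ℝ)) * (w₀ : ℝ) := by ring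
        _ ≤ (keep.card : ℝ) * (w₀ : ℝ) := mul_le_mul_of_nonneg_right h7 (by positivity)
    -- fits condition
    have hfits : ∀ c : Fin (K * K),
        FitsP w d p P (S.filter (fun i => assign i = c)) (boxes c) := by
      intro c
      rw [hfilter c]
      by_cases hreal : (cellQ c).Nonempty ∧ (c : ℕ) / K ≠ 0 ∧ (c : ℕ) % K ≠ 0
      · rw [hcell_keep c hreal.2.1 hreal.2.2]
        constructor
        · rw [Finset.sum_image (fun q _ q' _ h => huinj h),
            Finset.sum_congr rfl (fun q _ => hd _ (huT q)),
            Finset.sum_const, smul_eq_mul]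
          rw [hboxes_def]
          simp only [dif_pos hreal]
          exact le_of_eq (mul_comm _ _)
        · intro i hi
          rw [Finset.mem_image] at hi
          obtain ⟨q, hq, rfl⟩ := hi
          have hfi := hfacts (u q) (huT q)
          refine ⟨?_, ?_, ?_⟩
          · have hsub : P (u q) ⊆ (boxes c).pb := by
              rw [hboxes_def]
              simp only [dif_pos hreal, Box.pb]
              rw [hfi.2.2.2.2.1]
              apply Finset.Icc_subset_Icc
              · exact Finset.min'_le _ _ (Finset.mem_image_of_mem (fun q' => A (u q')) hq)
              · exact Finset.le_max' _ _ (Finset.mem_image_of_mem (fun q' => B (u q')) hq)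
            rw [Finset.inter_eq_left.mpr hsub, hfi.2.2.2.2.2]
          · rw [hw _ (huT q), hboxes_def]
            simp only [dif_pos hreal]
          · rw [hd _ (huT q), hboxes_def]
            simp only [dif_pos hreal]
      · have hempty : cellQ c ∩ keep = ∅ := by
          apply Finset.eq_empty_iff_forall_notMem.mpr
          intro q hq
          rw [Finset.mem_inter] at hq
          have hqc := (hmem_cell c q).mp hq.1
          have hk := (hmem_keep q).mp hq.2
          apply hreal
          refine ⟨⟨q, hq.1⟩, ?_, ?_⟩
          · have e1 : (c : ℕ) / K = (q : ℕ) / s := by rw [← hqc, hencdiv]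
            rw [e1]
            intro h0
            exact hk (Or.inl h0)
          · have e2 : (c : ℕ) % K = ((q : ℕ) % s) / t := by rw [← hqc, hencmod]
            rw [e2]
            intro h0
            exact hk (Or.inr h0)
        rw [hempty, Finset.image_empty]
        exact ⟨by simp, fun i hi => absurd hi (Finset.notMem_empty i)⟩
    have hsub : S ⊆ T' := by
      intro i hi
      rw [hS_def, Finset.mem_image] at hi
      obtain ⟨q, _, rfl⟩ := hi
      exact huT q
    exact ⟨S, K * K, boxes, assign, hsub, hKK, hcap, hwt, hfits⟩
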